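/- Let ω be a bounded open set, p a natural number, f ∈ L^p(ω), and ω₊, ω₋ ⊆ ω disjoint measurable sets with |ω| = |ω₊| + |ω₋|. Then ∫₀^{|ω₊|} (f†)^p ds + (−1)^p ∫₀^{|ω₋|} ((−f)†)^p ds = ∫_ω f^p, where f†(s) = (f⁺)*(s) − (f⁻)*(|ω| − s). -/

import Mathlib

open MeasureTheory Set

/-- The decreasing rearrangement of `g` on `ω`: the generalized inverse of the
distribution function of `g`. -/
noncomputable def decRearr {α : Type*} [MeasurableSpace α] (μ : Measure α)
    (ω : Set α) (g : α → ℝ) (s : ℝ) : ℝ :=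
  sInf {t : ℝ | (μ {x | x ∈ ω ∧ t < g x}).toReal < s}

/-- Talenti's rearrangement `f†(s) = (f⁺)*(s) − (f⁻)*(|ω| − s)`. -/
noncomputable def talenti {α : Type*} [MeasurableSpace α] (μ : Measure α)
    (ω : Set α) (f : α → ℝ) (s : ℝ) : ℝ :=
  decRearr μ ω (fun x => max (f x) 0) s
    - decRearr μ ω (fun x => max (-f x) 0) ((μ ω).toReal - s)

open scoped ENNReal

namespace TalentiProof

variable {α : Type*} [MeasurableSpace α] (μ : Measure α) (ω : Set α) (g : α → ℝ)

/-- distribution function -/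
noncomputable def dF (t : ℝ) : ℝ := (μ {x | x ∈ ω ∧ t < g x}).toReal

lemma decRearr_eq (s : ℝ) : decRearr μ ω g s = sInf {t | dF μ ω g t < s} := rfl

variable {μ ω g}

lemma meas_ne_top (hω : μ ω ≠ ⊤) (t : ℝ) : μ {x | x ∈ ω ∧ t < g x} ≠ ⊤ :=
  ne_top_of_le_ne_top hω (measure_mono fun x hx => hx.1)

lemma dF_le (hω : μ ω ≠ ⊤) (t : ℝ) : dF μ ω g t ≤ (μ ω).toReal :=
  ENNReal.toReal_mono hω (measure_mono fun x hx => hx.1)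

lemma dF_anti (hω : μ ω ≠ ⊤) : Antitone (dF μ ω g) := fun t t' h =>
  ENNReal.toReal_mono (meas_ne_top hω t) (measure_mono fun x hx => ⟨hx.1, h.trans_lt hx.2⟩)

lemma dF_neg_eq (hg0 : ∀ x, 0 ≤ g x) {t : ℝ} (ht : t < 0) :
    dF μ ω g t = (μ ω).toReal := by
  have : {x | x ∈ ω ∧ t < g x} = ω := by
    ext x; simpa using fun _ => ht.trans_le (hg0 x)
  rw [dF, this]

lemma mem_S_nonneg (hg0 : ∀ x, 0 ≤ g x) {s t : ℝ} (hs : s ≤ (μ ω).toReal)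
    (ht : dF μ ω g t < s) : 0 ≤ t := by
  by_contra h
  push_neg at h
  rw [dF_neg_eq hg0 h] at ht
  exact absurd ht (not_lt.2 hs)

lemma bddBelow_S (hg0 : ∀ x, 0 ≤ g x) {s : ℝ} (hs : s ≤ (μ ω).toReal) :
    BddBelow {t | dF μ ω g t < s} :=
  ⟨0, fun _ ht => mem_S_nonneg hg0 hs ht⟩

lemma decRearr_le (hg0 : ∀ x, 0 ≤ g x) {s t : ℝ} (hs : s ≤ (μ ω).toReal)
    (ht : dF μ ω g t < s) : decRearr μ ω g s ≤ t :=
  csInf_le (bddBelow_S hg0 hs) ht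

lemma le_decRearr (hω : μ ω ≠ ⊤) {s t : ℝ} (hne : ∃ u, dF μ ω g u < s)
    (hst : s ≤ dF μ ω g t) : t ≤ decRearr μ ω g s :=
  le_csInf hne fun u hu => by
    by_contra h
    push_neg at h
    exact absurd (hst.trans (dF_anti hω h.le)) (not_le.2 hu)

lemma decRearr_nonneg (hg0 : ∀ x, 0 ≤ g x) {s : ℝ} (hne : ∃ u, dF μ ω g u < s)
    (hs : s ≤ (μ ω).toReal) : 0 ≤ decRearr μ ω g s :=
  le_csInf hne fun _ hu => mem_S_nonneg hg0 hs hu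

lemma exists_dF_lt (hg : Measurable g) (hg0 : ∀ x, 0 ≤ g x) {p : ℕ} (hp : 1 ≤ p)
    (hi : ∫⁻ x in ω, ENNReal.ofReal (g x ^ p) ∂μ ≠ ⊤) {s : ℝ} (hs : 0 < s) :
    ∃ t, dF μ ω g t < s := by
  set I := ∫⁻ x in ω, ENNReal.ofReal (g x ^ p) ∂μ with hI
  have hoS : ENNReal.ofReal s ≠ 0 := by simpa using hs
  obtain ⟨n, hn⟩ := ENNReal.exists_nat_gt
    (ENNReal.div_lt_top hi hoS).ne
  set t : ℝ := (n : ℝ) + 1 with htdef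
  have hn0 : (0:ℝ) ≤ (n:ℝ) := Nat.cast_nonneg n
  have ht1 : (1:ℝ) ≤ t := by linarith
  have ht0 : (0:ℝ) ≤ t := by linarith
  refine ⟨t, ?_⟩
  have cheb := mul_meas_ge_le_lintegral₀ (μ := μ.restrict ω)
    (f := fun x => ENNReal.ofReal (g x ^ p))
    ((hg.pow_const p).ennreal_ofReal.aemeasurable) (ENNReal.ofReal (t ^ p))
  have hsub : μ {x | x ∈ ω ∧ t < g x}
      ≤ (μ.restrict ω) {x | ENNReal.ofReal (t ^ p) ≤ ENNReal.ofReal (g x ^ p)} := by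
    have hmset : MeasurableSet {x | t < g x} := measurableSet_lt measurable_const hg
    have : μ {x | x ∈ ω ∧ t < g x} = (μ.restrict ω) {x | t < g x} := by
      rw [Measure.restrict_apply hmset]
      congr 1
      ext x; simp [and_comm]
    rw [this]
    apply measure_mono
    intro x hx
    exact ENNReal.ofReal_le_ofReal (pow_le_pow_left₀ ht0 (le_of_lt hx) p)
  have htp_ne0 : ENNReal.ofReal (t ^ p) ≠ 0 := by
    simp only [ne_eq, ENNReal.ofReal_eq_zero, not_le]
    positivity
  have htp_netop : ENNReal.ofReal (t ^ p) ≠ ⊤ := ENNReal.ofReal_ne_top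
  have hle : μ {x | x ∈ ω ∧ t < g x} ≤ I / ENNReal.ofReal (t ^ p) := by
    rw [ENNReal.le_div_iff_mul_le (Or.inl htp_ne0) (Or.inl htp_netop)]
    calc μ {x | x ∈ ω ∧ t < g x} * ENNReal.ofReal (t ^ p)
        ≤ (μ.restrict ω) {x | ENNReal.ofReal (t ^ p) ≤ ENNReal.ofReal (g x ^ p)}
            * ENNReal.ofReal (t ^ p) := by gcongr
      _ = ENNReal.ofReal (t ^ p)
            * (μ.restrict ω) {x | ENNReal.ofReal (t ^ p) ≤ ENNReal.ofReal (g x ^ p)} :=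
          mul_comm _ _
      _ ≤ I := cheb
  have hIlt : I < ENNReal.ofReal s * ENNReal.ofReal (t ^ p) := by
    have h1 : I < n * ENNReal.ofReal s := by
      rwa [ENNReal.div_lt_iff (Or.inl hoS) (Or.inl ENNReal.ofReal_ne_top)] at hn
    refine h1.trans_le ?_
    rw [mul_comm]
    gcongr
    calc (n : ℝ≥0∞) = ENNReal.ofReal (n : ℝ) := by simp
      _ ≤ ENNReal.ofReal (t ^ p) := by
          apply ENNReal.ofReal_le_ofReal
          calc (n:ℝ) ≤ t := by linarith
            _ ≤ t ^ p := le_self_pow₀ ht1 (by omega)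
  have hfin : μ {x | x ∈ ω ∧ t < g x} < ENNReal.ofReal s := by
    refine hle.trans_lt ?_
    rw [ENNReal.div_lt_iff (Or.inl htp_ne0) (Or.inl htp_netop)]
    rw [mul_comm] at hIlt ⊢
    exact hIlt
  exact ENNReal.toReal_lt_of_lt_ofReal hfin


lemma prim {p : ℕ} (hp : 1 ≤ p) (x : ℝ) :
    ∫ t in (0:ℝ)..x, (p:ℝ) * t ^ (p-1) = x ^ p := by
  rw [intervalIntegral.integral_const_mul, integral_pow]
  have h1 : p - 1 + 1 = p := Nat.succ_pred_eq_of_pos hp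
  have hp0 : (p:ℝ) ≠ 0 := Nat.cast_ne_zero.2 (by omega)
  rw [h1, zero_pow (by omega)]
  field_simp
  rw [Nat.cast_sub hp]; push_cast; ring

lemma meas_restrict_eq (hg : Measurable g) (t : ℝ) :
    (μ.restrict ω) {x | t < g x} = μ {x | x ∈ ω ∧ t < g x} := by
  rw [Measure.restrict_apply (measurableSet_lt measurable_const hg)]
  congr 1
  ext x; simp [and_comm]

lemma equimeas (hω : μ ω ≠ ⊤) (hg : Measurable g) (hg0 : ∀ x, 0 ≤ g x) {p : ℕ} (hp : 1 ≤ p)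
    (hi : ∫⁻ x in ω, ENNReal.ofReal (g x ^ p) ∂μ ≠ ⊤) :
    ∫⁻ s in Ioc (0:ℝ) (μ ω).toReal, ENNReal.ofReal (decRearr μ ω g s ^ p)
      = ∫⁻ x in ω, ENNReal.ofReal (g x ^ p) ∂μ := by
  set M := (μ ω).toReal with hM
  set h := decRearr μ ω g with hh
  have hne : ∀ {s : ℝ}, 0 < s → ∃ u, dF μ ω g u < s := fun hs =>
    exists_dF_lt hg hg0 hp hi hs
  have h_anti : AntitoneOn h (Ioc 0 M) := by
    intro s hs s' hs' hss'
    exact csInf_le_csInf (bddBelow_S hg0 hs'.2) (hne hs.1)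
      (fun u hu => lt_of_lt_of_le hu hss')
  have h_mble : AEMeasurable h (volume.restrict (Ioc 0 M)) :=
    aemeasurable_restrict_of_antitoneOn measurableSet_Ioc h_anti
  have h_nn : ∀ s ∈ Ioc (0:ℝ) M, 0 ≤ h s := fun s hs =>
    decRearr_nonneg hg0 (hne hs.1) hs.2
  have h_nn_ae : 0 ≤ᵐ[volume.restrict (Ioc (0:ℝ) M)] h :=
    (ae_restrict_iff' measurableSet_Ioc).2 (Filter.Eventually.of_forall h_nn)
  have gint : ∀ t > (0:ℝ), IntervalIntegrable (fun t : ℝ => (p:ℝ) * t ^ (p-1)) volume 0 t :=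
    fun t _ => (Continuous.intervalIntegrable (by continuity) 0 t)
  have gnn : ∀ᵐ t ∂(volume.restrict (Ioi (0:ℝ))), 0 ≤ (p:ℝ) * t ^ (p-1) :=
    (ae_restrict_iff' measurableSet_Ioi).2 (Filter.Eventually.of_forall
      (fun t ht => by have : (0:ℝ) < t := ht; positivity))
  set w : ℝ → ℝ≥0∞ := fun t => ENNReal.ofReal ((p:ℝ) * t ^ (p-1)) with hw
  have lay_lt := lintegral_comp_eq_lintegral_meas_lt_mul (volume.restrict (Ioc (0:ℝ) M))
    h_nn_ae h_mble gint gnn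
  have lay_le := lintegral_comp_eq_lintegral_meas_le_mul (volume.restrict (Ioc (0:ℝ) M))
    h_nn_ae h_mble gint gnn
  have lay_g := lintegral_comp_eq_lintegral_meas_lt_mul (μ.restrict ω)
    (Filter.Eventually.of_forall hg0) hg.aemeasurable gint gnn
  simp_rw [prim hp] at lay_lt lay_le lay_g
  have key_ofReal : ∀ t : ℝ, ENNReal.ofReal (dF μ ω g t) = μ {x | x ∈ ω ∧ t < g x} :=
    fun t => ENNReal.ofReal_toReal (meas_ne_top hω t)
  have upper : ∀ t ∈ Ioi (0:ℝ),
      (volume.restrict (Ioc (0:ℝ) M)) {s | t < h s} ≤ μ {x | x ∈ ω ∧ t < g x} := by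
    intro t _
    rw [Measure.restrict_apply' measurableSet_Ioc, ← key_ofReal]
    calc volume ({s | t < h s} ∩ Ioc 0 M) ≤ volume (Ioc (0:ℝ) (dF μ ω g t)) := by
          apply measure_mono
          rintro s ⟨hs1, hs2⟩
          refine ⟨hs2.1, ?_⟩
          by_contra hcon
          push_neg at hcon
          exact absurd (decRearr_le hg0 hs2.2 hcon) (not_le.2 hs1)
      _ = ENNReal.ofReal (dF μ ω g t) := by rw [Real.volume_Ioc, sub_zero]
  have lower : ∀ t ∈ Ioi (0:ℝ),
      μ {x | x ∈ ω ∧ t < g x} ≤ (volume.restrict (Ioc (0:ℝ) M)) {s | t ≤ h s} := by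
    intro t _
    rw [Measure.restrict_apply' measurableSet_Ioc, ← key_ofReal]
    calc ENNReal.ofReal (dF μ ω g t) = volume (Ioc (0:ℝ) (dF μ ω g t)) := by
          rw [Real.volume_Ioc, sub_zero]
      _ ≤ volume ({s | t ≤ h s} ∩ Ioc 0 M) := by
          apply measure_mono
          rintro s ⟨hs1, hs2⟩
          have hsM : s ≤ M := hs2.trans (dF_le hω t)
          exact ⟨le_decRearr hω (hne hs1) hs2, hs1, hsM⟩
  have LleR : ∫⁻ s in Ioc (0:ℝ) M, ENNReal.ofReal (h s ^ p)
      ≤ ∫⁻ x in ω, ENNReal.ofReal (g x ^ p) ∂μ := by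
    rw [lay_lt, lay_g]
    refine lintegral_mono_ae ((ae_restrict_iff' measurableSet_Ioi).2
      (Filter.Eventually.of_forall fun t ht => ?_))
    rw [meas_restrict_eq hg]
    exact mul_le_mul_left (upper t ht) (w t)
  have RleL : ∫⁻ x in ω, ENNReal.ofReal (g x ^ p) ∂μ
      ≤ ∫⁻ s in Ioc (0:ℝ) M, ENNReal.ofReal (h s ^ p) := by
    rw [lay_le, lay_g]
    refine lintegral_mono_ae ((ae_restrict_iff' measurableSet_Ioi).2
      (Filter.Eventually.of_forall fun t ht => ?_))
    rw [meas_restrict_eq hg]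
    exact mul_le_mul_left (lower t ht) (w t)
  exact le_antisymm LleR RleL


lemma decRearr_aemeasurable (hg : Measurable g) (hg0 : ∀ x, 0 ≤ g x) {p : ℕ} (hp : 1 ≤ p)
    (hi : ∫⁻ x in ω, ENNReal.ofReal (g x ^ p) ∂μ ≠ ⊤) :
    AEMeasurable (decRearr μ ω g) (volume.restrict (Ioc (0:ℝ) (μ ω).toReal)) := by
  refine aemeasurable_restrict_of_antitoneOn measurableSet_Ioc ?_
  intro s hs s' hs' hss'
  exact csInf_le_csInf (bddBelow_S hg0 hs'.2) (exists_dF_lt hg hg0 hp hi hs.1)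
    (fun u hu => lt_of_lt_of_le hu hss')

lemma sum_dF_zero_le (hω : μ ω ≠ ⊤) (hmω : MeasurableSet ω) {g1 g2 : α → ℝ}
    (hg1 : Measurable g1) (hg2 : Measurable g2)
    (hdis : ∀ x, g1 x = 0 ∨ g2 x = 0) (h10 : ∀ x, 0 ≤ g1 x) (h20 : ∀ x, 0 ≤ g2 x) :
    dF μ ω g1 0 + dF μ ω g2 0 ≤ (μ ω).toReal := by
  set A := {x | x ∈ ω ∧ (0:ℝ) < g1 x}
  set B := {x | x ∈ ω ∧ (0:ℝ) < g2 x}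
  have hAm : MeasurableSet A := hmω.inter (measurableSet_lt measurable_const hg1)
  have hBm : MeasurableSet B := hmω.inter (measurableSet_lt measurable_const hg2)
  have hAB : Disjoint A B := by
    rw [Set.disjoint_left]
    rintro x ⟨_, h1⟩ ⟨_, h2⟩
    rcases hdis x with h | h
    · exact absurd h (ne_of_gt h1)
    · exact absurd h (ne_of_gt h2)
  have hsum : μ A + μ B = μ (A ∪ B) := (measure_union hAB hBm).symm
  have hU : μ (A ∪ B) ≤ μ ω := measure_mono (by rintro x (⟨h, _⟩ | ⟨h, _⟩) <;> exact h)
  have : dF μ ω g1 0 + dF μ ω g2 0 = (μ A + μ B).toReal := by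
    rw [ENNReal.toReal_add (meas_ne_top hω 0) (meas_ne_top hω 0)]
    rfl
  rw [this, hsum]
  exact ENNReal.toReal_mono hω hU

lemma talenti_pow_split (hω : μ ω ≠ ⊤) (hmω : MeasurableSet ω) {g1 g2 : α → ℝ}
    (hg1 : Measurable g1) (hg2 : Measurable g2)
    (h10 : ∀ x, 0 ≤ g1 x) (h20 : ∀ x, 0 ≤ g2 x) {p : ℕ} (hp : 1 ≤ p)
    (hi1 : ∫⁻ x in ω, ENNReal.ofReal (g1 x ^ p) ∂μ ≠ ⊤)
    (hi2 : ∫⁻ x in ω, ENNReal.ofReal (g2 x ^ p) ∂μ ≠ ⊤)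
    (hdis : ∀ x, g1 x = 0 ∨ g2 x = 0)
    {s : ℝ} (hs : s ∈ Ioc (0:ℝ) (μ ω).toReal) (hs1 : s ≠ dF μ ω g1 0)
    (hsM : s ≠ (μ ω).toReal) :
    (decRearr μ ω g1 s - decRearr μ ω g2 ((μ ω).toReal - s)) ^ p
      = decRearr μ ω g1 s ^ p + (-1:ℝ)^p * decRearr μ ω g2 ((μ ω).toReal - s) ^ p := by
  set M := (μ ω).toReal with hMdef
  have hsM' : s < M := lt_of_le_of_ne hs.2 hsM
  have hms : M - s ∈ Ioc (0:ℝ) M := ⟨by linarith, by linarith [hs.1]⟩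
  have ha0 : 0 ≤ decRearr μ ω g1 s :=
    decRearr_nonneg h10 (exists_dF_lt hg1 h10 hp hi1 hs.1) hs.2
  have hb0 : 0 ≤ decRearr μ ω g2 (M - s) :=
    decRearr_nonneg h20 (exists_dF_lt hg2 h20 hp hi2 hms.1) hms.2
  have hzero : decRearr μ ω g1 s = 0 ∨ decRearr μ ω g2 (M - s) = 0 := by
    by_contra hcon
    push_neg at hcon
    have ha : 0 < decRearr μ ω g1 s := lt_of_le_of_ne ha0 (Ne.symm hcon.1)
    have hb : 0 < decRearr μ ω g2 (M - s) := lt_of_le_of_ne hb0 (Ne.symm hcon.2)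
    have h1 : s ≤ dF μ ω g1 0 := by
      by_contra hc
      push_neg at hc
      exact absurd (decRearr_le h10 hs.2 hc) (not_le.2 ha)
    have h2 : M - s ≤ dF μ ω g2 0 := by
      by_contra hc
      push_neg at hc
      exact absurd (decRearr_le h20 hms.2 hc) (not_le.2 hb)
    have h3 := sum_dF_zero_le hω hmω hg1 hg2 hdis h10 h20
    have : s = dF μ ω g1 0 := by linarith
    exact hs1 this
  have hpne : p ≠ 0 := by omega
  rcases hzero with h | h
  · rw [h, zero_sub, neg_pow, zero_pow hpne]
    ring
  · rw [h, sub_zero, zero_pow hpne]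
    ring

end TalentiProof


/-- If `ω₊, ω₋ ⊆ ω` are disjoint measurable sets with `|ω| = |ω₊| + |ω₋|` and
`f ∈ L^p(ω)` with `p` a natural number, then
`∫₀^{|ω₊|} (f†)^p + (−1)^p ∫₀^{|ω₋|} ((−f)†)^p = ∫_ω f^p`. -/
theorem stmt_5 (d : ℕ) (p : ℕ) (ω : Set (EuclideanSpace ℝ (Fin d)))
    (hωo : IsOpen ω) (hωb : Bornology.IsBounded ω)
    (f : EuclideanSpace ℝ (Fin d) → ℝ) (hf : Measurable f)
    (hfp : MemLp f p (volume.restrict ω))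
    (ωp ωm : Set (EuclideanSpace ℝ (Fin d)))
    (hps : ωp ⊆ ω) (hms : ωm ⊆ ω)
    (hpm : MeasurableSet ωp) (hmm : MeasurableSet ωm)
    (hdisj : Disjoint ωp ωm)
    (hvol : volume ω = volume ωp + volume ωm) :
    (∫ s in (0 : ℝ)..(volume ωp).toReal, (talenti volume ω f s) ^ p)
      + (-1 : ℝ) ^ p *
        ∫ s in (0 : ℝ)..(volume ωm).toReal, (talenti volume ω (fun x => -f x) s) ^ p
      = ∫ x in ω, (f x) ^ p := by
  have hωfin : volume ω ≠ ⊤ := hωb.measure_lt_top.ne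
  have hpfin : volume ωp ≠ ⊤ := ne_top_of_le_ne_top hωfin (measure_mono hps)
  have hmfin : volume ωm ≠ ⊤ := ne_top_of_le_ne_top hωfin (measure_mono hms)
  set M : ℝ := (volume ω).toReal with hMdef
  set Mp : ℝ := (volume ωp).toReal with hMpdef
  set Mm : ℝ := (volume ωm).toReal with hMmdef
  have hMsum : Mp + Mm = M := by
    rw [hMpdef, hMmdef, hMdef, hvol, ENNReal.toReal_add hpfin hmfin]
  have hMp0 : (0:ℝ) ≤ Mp := ENNReal.toReal_nonneg
  have hMm0 : (0:ℝ) ≤ Mm := ENNReal.toReal_nonneg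
  have hM0 : (0:ℝ) ≤ M := ENNReal.toReal_nonneg
  have hMpM : Mp ≤ M := by linarith
  have hMmM : Mm ≤ M := by linarith
  rcases Nat.eq_zero_or_pos p with hp0 | hp1
  · subst hp0
    simp only [pow_zero, one_mul]
    rw [intervalIntegral.integral_const, intervalIntegral.integral_const, setIntegral_const]
    simp only [smul_eq_mul, mul_one, sub_zero]
    linarith [show volume.real ω = M from rfl]
  · have hp : 1 ≤ p := hp1
    have hmω : MeasurableSet ω := hωo.measurableSet
    set gp : EuclideanSpace ℝ (Fin d) → ℝ := fun x => max (f x) 0 with hgpdef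
    set gm : EuclideanSpace ℝ (Fin d) → ℝ := fun x => max (-f x) 0 with hgmdef
    have hgp : Measurable gp := hf.max measurable_const
    have hgm : Measurable gm := hf.neg.max measurable_const
    have hgp0 : ∀ x, 0 ≤ gp x := fun x => le_max_right _ _
    have hgm0 : ∀ x, 0 ≤ gm x := fun x => le_max_right _ _
    have hdis : ∀ x, gp x = 0 ∨ gm x = 0 := by
      intro x
      rcases le_total (f x) 0 with h | h
      · exact Or.inl (max_eq_right h)
      · exact Or.inr (max_eq_right (by simpa using h))
    have hInt : Integrable (fun x => |f x| ^ p) (volume.restrict ω) := by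
      have h1 := hfp.integrable_norm_rpow
        (by exact_mod_cast Nat.cast_ne_zero.mpr (by omega) : ((p:ℕ):ℝ≥0∞) ≠ 0)
        (ENNReal.natCast_ne_top p)
      simpa [ENNReal.toReal_natCast, Real.rpow_natCast, Real.norm_eq_abs] using h1
    have habs : ∀ g : EuclideanSpace ℝ (Fin d) → ℝ, Measurable g → (∀ x, 0 ≤ g x) →
        (∀ x, g x ≤ |f x|) → Integrable (fun x => g x ^ p) (volume.restrict ω) := by
      intro g hg hg0 hgle
      refine hInt.mono ((hg.pow_const p).aestronglyMeasurable)
        (Filter.Eventually.of_forall fun x => ?_)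
      have h0 : (0:ℝ) ≤ g x := hg0 x
      rw [Real.norm_eq_abs, Real.norm_eq_abs, abs_of_nonneg (by positivity),
        abs_of_nonneg (by positivity)]
      exact pow_le_pow_left₀ (hg0 x) (hgle x) p
    have hIgp : Integrable (fun x => gp x ^ p) (volume.restrict ω) :=
      habs gp hgp hgp0 (fun x => max_le (le_abs_self _) (abs_nonneg _))
    have hIgm : Integrable (fun x => gm x ^ p) (volume.restrict ω) :=
      habs gm hgm hgm0 (fun x => max_le (neg_le_abs _) (abs_nonneg _))
    have hLp : ∫⁻ x in ω, ENNReal.ofReal (gp x ^ p) ∂volume ≠ ⊤ := hIgp.lintegral_lt_top.ne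
    have hLm : ∫⁻ x in ω, ENNReal.ofReal (gm x ^ p) ∂volume ≠ ⊤ := hIgm.lintegral_lt_top.ne
    have Ep := TalentiProof.equimeas hωfin hgp hgp0 hp hLp
    have Em := TalentiProof.equimeas hωfin hgm hgm0 hp hLm
    set u : ℝ → ℝ := decRearr volume ω gp with hudef
    set v : ℝ → ℝ := decRearr volume ω gm with hvdef
    have humeas : AEMeasurable u (volume.restrict (Ioc (0:ℝ) M)) :=
      TalentiProof.decRearr_aemeasurable hgp hgp0 hp hLp
    have hvmeas : AEMeasurable v (volume.restrict (Ioc (0:ℝ) M)) :=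
      TalentiProof.decRearr_aemeasurable hgm hgm0 hp hLm
    have hu_nn : ∀ s ∈ Ioc (0:ℝ) M, 0 ≤ u s := fun s hs =>
      TalentiProof.decRearr_nonneg hgp0 (TalentiProof.exists_dF_lt hgp hgp0 hp hLp hs.1) hs.2
    have hv_nn : ∀ s ∈ Ioc (0:ℝ) M, 0 ≤ v s := fun s hs =>
      TalentiProof.decRearr_nonneg hgm0 (TalentiProof.exists_dF_lt hgm hgm0 hp hLm hs.1) hs.2
    have hu_nn_ae : 0 ≤ᵐ[volume.restrict (Ioc (0:ℝ) M)] fun s => u s ^ p :=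
      (ae_restrict_iff' measurableSet_Ioc).2
        (Filter.Eventually.of_forall fun s hs => pow_nonneg (hu_nn s hs) p)
    have hv_nn_ae : 0 ≤ᵐ[volume.restrict (Ioc (0:ℝ) M)] fun s => v s ^ p :=
      (ae_restrict_iff' measurableSet_Ioc).2
        (Filter.Eventually.of_forall fun s hs => pow_nonneg (hv_nn s hs) p)
    have hu_int : IntegrableOn (fun s => u s ^ p) (Ioc (0:ℝ) M) volume := by
      refine ⟨((humeas.pow_const p).aestronglyMeasurable), ?_⟩
      rw [hasFiniteIntegral_iff_ofReal hu_nn_ae]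
      exact Ep ▸ hLp.lt_top
    have hv_int : IntegrableOn (fun s => v s ^ p) (Ioc (0:ℝ) M) volume := by
      refine ⟨((hvmeas.pow_const p).aestronglyMeasurable), ?_⟩
      rw [hasFiniteIntegral_iff_ofReal hv_nn_ae]
      exact Em ▸ hLm.lt_top
    have hu_val : ∫ s in Ioc (0:ℝ) M, u s ^ p = ∫ x in ω, gp x ^ p := by
      rw [integral_eq_lintegral_of_nonneg_ae hu_nn_ae ((humeas.pow_const p).aestronglyMeasurable),
        integral_eq_lintegral_of_nonneg_ae
          (Filter.Eventually.of_forall fun x => pow_nonneg (hgp0 x) p)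
          ((hgp.pow_const p).aestronglyMeasurable), Ep]
    have hv_val : ∫ s in Ioc (0:ℝ) M, v s ^ p = ∫ x in ω, gm x ^ p := by
      rw [integral_eq_lintegral_of_nonneg_ae hv_nn_ae ((hvmeas.pow_const p).aestronglyMeasurable),
        integral_eq_lintegral_of_nonneg_ae
          (Filter.Eventually.of_forall fun x => pow_nonneg (hgm0 x) p)
          ((hgm.pow_const p).aestronglyMeasurable), Em]
    have hIIu : ∀ a b : ℝ, 0 ≤ a → a ≤ b → b ≤ M →
        IntervalIntegrable (fun s => u s ^ p) volume a b := by
      intro a b ha hab hbM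
      rw [intervalIntegrable_iff_integrableOn_Ioc_of_le hab]
      exact hu_int.mono_set (Ioc_subset_Ioc ha hbM)
    have hIIv : ∀ a b : ℝ, 0 ≤ a → a ≤ b → b ≤ M →
        IntervalIntegrable (fun s => v s ^ p) volume a b := by
      intro a b ha hab hbM
      rw [intervalIntegrable_iff_integrableOn_Ioc_of_le hab]
      exact hv_int.mono_set (Ioc_subset_Ioc ha hbM)
    have hbad : ∀ a0 : ℝ, ∀ᵐ s : ℝ ∂volume, s ≠ a0 ∧ s ≠ M := by
      intro a0
      rw [ae_iff]
      refine measure_mono_null (fun s hs => ?_) (?_ : volume ({a0} ∪ {M} : Set ℝ) = 0)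
      · simp only [mem_setOf_eq, not_and_or, not_not] at hs
        rcases hs with h | h <;> simp [h]
      · refine measure_union_null ?_ ?_ <;> exact Real.volume_singleton
    -- interval integrability of reflected integrands
    have hIIvr : IntervalIntegrable (fun s => v (M - s) ^ p) volume 0 Mp := by
      have h := ((hIIv Mm M hMm0 hMmM le_rfl).comp_sub_left M).symm
      rw [sub_self, show M - Mm = Mp by linarith] at h
      exact h
    have hIIur : IntervalIntegrable (fun s => u (M - s) ^ p) volume 0 Mm := by
      have h := ((hIIu Mp M hMp0 hMpM le_rfl).comp_sub_left M).symm
      rw [sub_self, show M - Mp = Mm by linarith] at h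
      exact h
    have split1 : ∫ s in (0:ℝ)..Mp, (talenti volume ω f s) ^ p
        = (∫ s in (0:ℝ)..Mp, u s ^ p) + (-1:ℝ)^p * ∫ s in Mm..M, v s ^ p := by
      have hcong : ∫ s in (0:ℝ)..Mp, (talenti volume ω f s) ^ p
          = ∫ s in (0:ℝ)..Mp, (u s ^ p + (-1:ℝ)^p * v (M - s) ^ p) := by
        refine intervalIntegral.integral_congr_ae ?_
        filter_upwards [hbad (TalentiProof.dF volume ω gp 0)] with s hs hsmem
        rw [uIoc_of_le hMp0] at hsmem
        have hsIoc : s ∈ Ioc (0:ℝ) M := ⟨hsmem.1, hsmem.2.trans hMpM⟩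
        have key := TalentiProof.talenti_pow_split hωfin hmω hgp hgm hgp0 hgm0 hp hLp hLm
          hdis hsIoc hs.1 hs.2
        simpa only [talenti] using key
      rw [hcong, intervalIntegral.integral_add (hIIu 0 Mp le_rfl hMp0 hMpM) ?_]
      · congr 1
        rw [intervalIntegral.integral_const_mul]
        congr 1
        rw [intervalIntegral.integral_comp_sub_left (fun t => v t ^ p) M, sub_zero,
          show M - Mp = Mm by linarith]
      · exact hIIvr.const_mul _
    have hnn : (fun x => max (-(-f x)) 0) = gp := by funext x; rw [neg_neg]
    have split2 : ∫ s in (0:ℝ)..Mm, (talenti volume ω (fun x => -f x) s) ^ p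
        = (∫ s in (0:ℝ)..Mm, v s ^ p) + (-1:ℝ)^p * ∫ s in Mp..M, u s ^ p := by
      have hcong : ∫ s in (0:ℝ)..Mm, (talenti volume ω (fun x => -f x) s) ^ p
          = ∫ s in (0:ℝ)..Mm, (v s ^ p + (-1:ℝ)^p * u (M - s) ^ p) := by
        refine intervalIntegral.integral_congr_ae ?_
        filter_upwards [hbad (TalentiProof.dF volume ω gm 0)] with s hs hsmem
        rw [uIoc_of_le hMm0] at hsmem
        have hsIoc : s ∈ Ioc (0:ℝ) M := ⟨hsmem.1, hsmem.2.trans hMmM⟩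
        have key := TalentiProof.talenti_pow_split hωfin hmω hgm hgp hgm0 hgp0 hp hLm hLp
          (fun x => (hdis x).symm) hsIoc hs.1 hs.2
        simpa only [talenti, hnn] using key
      rw [hcong, intervalIntegral.integral_add (hIIv 0 Mm le_rfl hMm0 hMmM) ?_]
      · congr 1
        rw [intervalIntegral.integral_const_mul]
        congr 1
        rw [intervalIntegral.integral_comp_sub_left (fun t => u t ^ p) M, sub_zero,
          show M - Mm = Mp by linarith]
      · exact hIIur.const_mul _
    have addu := intervalIntegral.integral_add_adjacent_intervals
      (hIIu 0 Mp le_rfl hMp0 hMpM) (hIIu Mp M hMp0 hMpM le_rfl)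
    have addv := intervalIntegral.integral_add_adjacent_intervals
      (hIIv 0 Mm le_rfl hMm0 hMmM) (hIIv Mm M hMm0 hMmM le_rfl)
    have hu_total : ∫ s in (0:ℝ)..M, u s ^ p = ∫ x in ω, gp x ^ p := by
      rw [intervalIntegral.integral_of_le hM0]; exact hu_val
    have hv_total : ∫ s in (0:ℝ)..M, v s ^ p = ∫ x in ω, gm x ^ p := by
      rw [intervalIntegral.integral_of_le hM0]; exact hv_val
    have hA : (∫ s in (0:ℝ)..Mp, u s ^ p) + ∫ s in Mp..M, u s ^ p = ∫ x in ω, gp x ^ p := by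
      rw [addu, hu_total]
    have hB : (∫ s in (0:ℝ)..Mm, v s ^ p) + ∫ s in Mm..M, v s ^ p = ∫ x in ω, gm x ^ p := by
      rw [addv, hv_total]
    have hRHS : ∫ x in ω, f x ^ p
        = (∫ x in ω, gp x ^ p) + (-1:ℝ)^p * ∫ x in ω, gm x ^ p := by
      have hpt : ∀ x, f x ^ p = gp x ^ p + (-1:ℝ)^p * gm x ^ p := by
        intro x
        rcases le_total (f x) 0 with h | h
        · have h1 : gp x = 0 := max_eq_right h
          have h2 : gm x = -f x := max_eq_left (by simpa using h)
          rw [h1, h2, zero_pow (by omega), ← mul_pow, neg_one_mul, neg_neg, zero_add]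
        · have h1 : gp x = f x := max_eq_left h
          have h2 : gm x = 0 := max_eq_right (by simpa using h)
          rw [h1, h2, zero_pow (by omega), mul_zero, add_zero]
      rw [integral_congr_ae (Filter.Eventually.of_forall hpt),
        integral_add hIgp (hIgm.const_mul _), integral_const_mul]
    have hc : (-1:ℝ)^p * (-1:ℝ)^p = 1 := by rw [← mul_pow]; norm_num
    rw [split1, split2, hRHS]
    linear_combination hA + (-1:ℝ)^p * hB + (∫ s in Mp..M, u s ^ p) * hc
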